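/- arXiv:1206.5433 — 2 statements merged into one kernel-verified Lean document; each statement's English description precedes it below -/
import Mathlib

section
/- (Addition formula.) For every real q with 0 < q < 1, integers α ≥ 1 and n ≥ 0, and every real x ≥ 0, Ẽ_{n,q}(x|α) = Σ_{k=0}^{n} C(n,k) q^{α k x} Ẽ_{k,q}(α) [x:q^α]^{n−k}. -/
open scoped BigOperators

/-- `[x:q] = (q^x - 1)/(q - 1)` with real exponentiation. -/
noncomputable def qNum (q x : ℝ) : ℝ := (q ^ x - 1) / (q - 1)

/-- Weighted `q`-Euler polynomial `Ẽ_{n,q}(x|α) = [2:q] ∑_{m≥0} (-1)^m q^m [m+x:q^α]^n`. -/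
noncomputable def qEuler (q : ℝ) (α n : ℕ) (x : ℝ) : ℝ :=
  qNum q 2 * ∑' m : ℕ, (-1 : ℝ) ^ m * q ^ m * (qNum (q ^ α) ((m : ℝ) + x)) ^ n

lemma qNum_bound {Q : ℝ} (hQ0 : 0 < Q) (hQ1 : Q < 1) (m : ℕ) :
    |qNum Q (m : ℝ)| ≤ 1 / (1 - Q) := by
  have h1 : Q ^ (m : ℝ) = Q ^ m := Real.rpow_natCast Q m
  have h2 : 0 ≤ Q ^ m := pow_nonneg hQ0.le m
  have h3 : Q ^ m ≤ 1 := pow_le_one₀ hQ0.le hQ1.le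
  rw [qNum, h1, abs_div, abs_of_nonpos (by linarith), abs_of_nonpos (by linarith)]
  rw [div_le_div_iff₀ (by linarith) (by linarith)]
  nlinarith

lemma summable_aux {q : ℝ} (hq0 : 0 < q) (hq1 : q < 1) {Q : ℝ} (hQ0 : 0 < Q) (hQ1 : Q < 1)
    (k : ℕ) (c : ℝ) :
    Summable (fun m : ℕ => (-1 : ℝ) ^ m * q ^ m * (c * qNum Q (m : ℝ)) ^ k) := by
  apply Summable.of_norm_bounded (g := fun m : ℕ => (|c| * (1 / (1 - Q))) ^ k * q ^ m)
  · exact (summable_geometric_of_lt_one hq0.le hq1).mul_left _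
  · intro m
    rw [norm_mul, norm_mul, norm_pow, norm_pow, norm_neg, norm_one, one_pow, one_mul,
      Real.norm_eq_abs, Real.norm_eq_abs, abs_of_pos hq0, mul_comm]
    gcongr
    rw [abs_pow, abs_mul]
    gcongr
    exact qNum_bound hQ0 hQ1 m

theorem statement3 (q : ℝ) (hq0 : 0 < q) (hq1 : q < 1)
    (α : ℕ) (hα : 1 ≤ α) (n : ℕ) (x : ℝ) (hx : 0 ≤ x) :
    qEuler q α n x =
      ∑ k ∈ Finset.range (n + 1),
        (n.choose k : ℝ) * q ^ ((↑(α * k) : ℝ) * x) * qEuler q α k 0 *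
          (qNum (q ^ α) x) ^ (n - k) := by
  set Q : ℝ := q ^ α with hQdef
  have hQ0 : 0 < Q := pow_pos hq0 α
  have hQ1 : Q < 1 := pow_lt_one₀ hq0.le hq1 (by omega)
  have hQne : Q - 1 ≠ 0 := by linarith
  have key : ∀ m : ℕ, qNum Q ((m : ℝ) + x) = Q ^ x * qNum Q (m : ℝ) + qNum Q x := by
    intro m
    rw [qNum, qNum, qNum, Real.rpow_add hQ0]
    field_simp
    ring
  have expand : ∀ m : ℕ,
      (qNum Q ((m : ℝ) + x)) ^ n =
      ∑ k ∈ Finset.range (n + 1),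
        (Q ^ x * qNum Q (m : ℝ)) ^ k * qNum Q x ^ (n - k) * (n.choose k : ℝ) := by
    intro m; rw [key m, add_pow]
  have hsum : ∀ k : ℕ, Summable (fun m : ℕ =>
      (-1 : ℝ) ^ m * q ^ m * ((Q ^ x * qNum Q (m : ℝ)) ^ k * qNum Q x ^ (n - k) *
        (n.choose k : ℝ))) := by
    intro k
    have := (summable_aux hq0 hq1 hQ0 hQ1 k (Q ^ x)).mul_right
      (qNum Q x ^ (n - k) * (n.choose k : ℝ))
    apply this.congr
    intro m; ring
  have step1 : (∑' m : ℕ, (-1 : ℝ) ^ m * q ^ m * (qNum Q ((m : ℝ) + x)) ^ n)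
      = ∑ k ∈ Finset.range (n + 1), ∑' m : ℕ,
          (-1 : ℝ) ^ m * q ^ m * ((Q ^ x * qNum Q (m : ℝ)) ^ k * qNum Q x ^ (n - k) *
            (n.choose k : ℝ)) := by
    rw [← Summable.tsum_finsetSum (fun k _ => hsum k)]
    congr 1; funext m
    rw [expand m, Finset.mul_sum]
  have hEk : ∀ k : ℕ, qEuler q α k 0 =
      qNum q 2 * ∑' m : ℕ, (-1 : ℝ) ^ m * q ^ m * (qNum Q (m : ℝ)) ^ k := by
    intro k; rw [qEuler, hQdef]; norm_num
  have hpow : ∀ k : ℕ, (Q ^ x) ^ k = q ^ ((↑(α * k) : ℝ) * x) := by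
    intro k
    rw [hQdef, ← Real.rpow_natCast q α, ← Real.rpow_mul hq0.le, ← Real.rpow_natCast _ k,
      ← Real.rpow_mul hq0.le]
    congr 1
    push_cast
    ring
  rw [qEuler, step1, Finset.mul_sum]
  apply Finset.sum_congr rfl
  intro k _
  rw [hEk k]
  have pull : (∑' m : ℕ,
      (-1 : ℝ) ^ m * q ^ m * ((Q ^ x * qNum Q (m : ℝ)) ^ k * qNum Q x ^ (n - k) *
        (n.choose k : ℝ)))
      = (∑' m : ℕ, (-1 : ℝ) ^ m * q ^ m * (qNum Q (m : ℝ)) ^ k) *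
        ((Q ^ x) ^ k * qNum Q x ^ (n - k) * (n.choose k : ℝ)) := by
    rw [← tsum_mul_right]
    congr 1; funext m
    rw [mul_pow]; ring
  rw [pull, hpow k]
  ring
end

section
/- Let q be real with 0 < q < 1, α ≥ 1 an integer, d an odd positive integer, χ a Dirichlet character modulo d, F an odd positive integer divisible by d, 0 ≤ a < F an integer, x > 0 real, and n ≥ 0 an integer. Then H_q^χ(−n : x : a : F | α) = ( [2:q] / [2:q^F] ) · q^a (−1)^a χ(a) [F:q^α]^n · Ẽ_{n,q^F}( (x+a)/F | α ). -/
open scoped BigOperators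

/-- Partial Dirichlet-type zeta function
`H_q^χ(s : x : a : F | α) = [2:q] ∑_{m ≡ a (mod F)} q^m χ(m) (-1)^m [x+m:q^α]^{-s}`,
the sum over `m ≥ 0` with `m ≡ a (mod F)` being parametrized by `m = a + F j`, `j ≥ 0`. -/
noncomputable def qPartialZeta (q : ℝ) (d : ℕ) (χ : DirichletCharacter ℂ d) (α : ℕ)
    (s : ℂ) (x : ℝ) (a F : ℕ) : ℂ :=
  (qNum q 2 : ℂ) *
    ∑' j : ℕ, (q : ℂ) ^ (a + F * j) * χ ((a + F * j : ℕ) : ZMod d) * (-1 : ℂ) ^ (a + F * j) *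
      ((qNum (q ^ α) (x + ((a + F * j : ℕ) : ℝ)) : ℝ) : ℂ) ^ (-s)

lemma qNum_two (q : ℝ) (hq : q ≠ 1) : qNum q 2 = q + 1 := by
  unfold qNum
  have h2 : (q : ℝ) ^ (2:ℝ) = q ^ (2:ℕ) := by
    rw [show (2:ℝ) = ((2:ℕ):ℝ) by norm_num, Real.rpow_natCast]
  have h : q - 1 ≠ 0 := sub_ne_zero.mpr hq
  rw [h2]
  field_simp
  ring

lemma qNum_split (q : ℝ) (hq0 : 0 < q) (hq1 : q < 1) (α F : ℕ) (hα : 1 ≤ α)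
    (hF : 0 < F) (y : ℝ) :
    qNum (q ^ α) ((F : ℝ) * y) = qNum (q ^ α) F * qNum ((q ^ F) ^ α) y := by
  have hQ0 : (0:ℝ) < q ^ α := pow_pos hq0 α
  have hQ1 : q ^ α < 1 := pow_lt_one₀ hq0.le hq1 (by omega)
  have hQne : q ^ α - 1 ≠ 0 := sub_ne_zero.mpr (ne_of_lt hQ1)
  have hQF1 : (q ^ α) ^ F < 1 := pow_lt_one₀ hQ0.le hQ1 hF.ne'
  have hQFne : (q ^ α) ^ F - 1 ≠ 0 := sub_ne_zero.mpr (ne_of_lt hQF1)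
  have hcomm : (q ^ F) ^ α = (q ^ α) ^ F := by
    rw [← pow_mul, ← pow_mul, Nat.mul_comm]
  have hrw : (q ^ α) ^ ((F : ℝ) * y) = ((q ^ α) ^ F : ℝ) ^ (y : ℝ) := by
    rw [Real.rpow_mul hQ0.le, Real.rpow_natCast]
  unfold qNum
  rw [hcomm, hrw, Real.rpow_natCast]
  field_simp

theorem statement11 (q : ℝ) (hq0 : 0 < q) (hq1 : q < 1) (α : ℕ) (hα : 1 ≤ α)
    (d : ℕ) (hd0 : 0 < d) (hdo : Odd d) (χ : DirichletCharacter ℂ d)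
    (F : ℕ) (hF0 : 0 < F) (hFo : Odd F) (hdF : d ∣ F)
    (a : ℕ) (ha : a < F) (x : ℝ) (hx : 0 < x) (n : ℕ) :
    qPartialZeta q d χ α (-(n : ℂ)) x a F =
      ((qNum q 2 / qNum (q ^ F) 2 : ℝ) : ℂ) * (q : ℂ) ^ a * (-1 : ℂ) ^ a * χ (a : ZMod d) *
        ((qNum (q ^ α) F : ℝ) : ℂ) ^ n *
          ((qEuler (q ^ F) α n ((x + a) / F) : ℝ) : ℂ) := by
  have hF' : (F : ℝ) ≠ 0 := Nat.cast_ne_zero.mpr hF0.ne'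
  have hq1' : q ≠ 1 := ne_of_lt hq1
  have hG1 : q ^ F < 1 := pow_lt_one₀ hq0.le hq1 hF0.ne'
  have hG0 : (0:ℝ) < q ^ F := pow_pos hq0 F
  have hGne : q ^ F ≠ 1 := ne_of_lt hG1
  have h2 : qNum (q ^ F) 2 ≠ 0 := by
    rw [qNum_two _ hGne]; positivity
  have hFd : ((F : ℕ) : ZMod d) = 0 := (ZMod.natCast_eq_zero_iff F d).mpr hdF
  unfold qPartialZeta qEuler
  rw [neg_neg]
  have hts : ∀ j : ℕ,
      (q : ℂ) ^ (a + F * j) * χ ((a + F * j : ℕ) : ZMod d) * (-1 : ℂ) ^ (a + F * j) *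
        ((qNum (q ^ α) (x + ((a + F * j : ℕ) : ℝ)) : ℝ) : ℂ) ^ ((n : ℕ) : ℂ) =
      ((q : ℂ) ^ a * (-1 : ℂ) ^ a * χ ((a : ℕ) : ZMod d) *
          ((qNum (q ^ α) F : ℝ) : ℂ) ^ n) *
        (((-1 : ℝ) ^ j * (q ^ F) ^ j *
          (qNum ((q ^ F) ^ α) ((j : ℝ) + (x + a) / F)) ^ n : ℝ) : ℂ) := by
    intro j
    have hχ : ((a + F * j : ℕ) : ZMod d) = ((a : ℕ) : ZMod d) := by
      push_cast [hFd]; ring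
    have harg : x + ((a + F * j : ℕ) : ℝ) = (F : ℝ) * ((j : ℝ) + (x + a) / F) := by
      push_cast
      field_simp
      ring
    rw [hχ, harg, qNum_split q hq0 hq1 α F hα hF0, Complex.cpow_natCast,
      pow_add, pow_mul, pow_add, pow_mul, Odd.neg_one_pow hFo]
    push_cast
    ring
  rw [tsum_congr hts, tsum_mul_left, ← Complex.ofReal_tsum]
  rw [show ((qNum q 2 / qNum (q ^ F) 2 : ℝ) : ℂ)
      = ((qNum q 2 : ℝ) : ℂ) / ((qNum (q ^ F) 2 : ℝ) : ℂ) by push_cast; ring]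
  have h2c : ((qNum (q ^ F) 2 : ℝ) : ℂ) ≠ 0 := Complex.ofReal_ne_zero.mpr h2
  push_cast
  field_simp
  congr 1
  refine tsum_congr fun j => ?_
  ring_nf
end
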